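/- Let Δ ⊂ ℝⁿ be a reflexive simplex with vertices p₀, …, pₙ and dual vertices l₀, …, lₙ satisfying ⟨p_i, l_j⟩ = −1 for i ≠ j, and set b_{ii} = ⟨p_i, l_i⟩ and d = lcm(b₀₀+1, …, bₙₙ+1). Then there is a unique tuple w = (w₀, …, wₙ) of positive integers with gcd(w₀, …, wₙ) = 1 such that ∑ w_i p_i = 0 (the weights of Δ); this w satisfies B(Δ)·w = 0 for the matrix B(Δ) = (⟨p_i, l_j⟩), and w_i = d/(b_{ii}+1) for every i. -/
import Mathlib


open Finset

/-- The standard dot product on `Fin n → ℝ`. -/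
def dotp {n : ℕ} (x y : Fin n → ℝ) : ℝ := ∑ i, x i * y i

/-- A point of `ℝⁿ` all of whose coordinates are integers. -/
def IsLatticePoint {n : ℕ} (x : Fin n → ℝ) : Prop := ∀ i, ∃ m : ℤ, x i = (m : ℝ)

/-- A lattice polytope: the convex hull of finitely many lattice points. -/
def IsLatticePolytope {n : ℕ} (Δ : Set (Fin n → ℝ)) : Prop :=
  ∃ V : Set (Fin n → ℝ), V.Finite ∧ (∀ v ∈ V, IsLatticePoint v) ∧ Δ = convexHull ℝ V

/-- A (nonempty) face of a convex set `Δ`, cut out by a supporting hyperplane. -/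
def IsFaceOf {n : ℕ} (F Δ : Set (Fin n → ℝ)) : Prop :=
  F.Nonempty ∧ ∃ u : Fin n → ℝ, ∃ c : ℝ,
    (∀ x ∈ Δ, dotp x u ≤ c) ∧ F = {x ∈ Δ | dotp x u = c}

/-- The dimension of a subset of `ℝⁿ`: the dimension of its affine span. -/
noncomputable def faceDim {n : ℕ} (F : Set (Fin n → ℝ)) : ℕ :=
  Module.finrank ℝ ↥(vectorSpan ℝ F)

/-- A reflexive polytope with respect to the lattice `ℤⁿ`: a lattice polytope with `0` in its
interior, each of whose facets lies on a hyperplane `{x | ⟨x, l⟩ = -1}` with `l ∈ ℤⁿ`. -/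
def IsReflexive {n : ℕ} (Δ : Set (Fin n → ℝ)) : Prop :=
  IsLatticePolytope Δ ∧ (0 : Fin n → ℝ) ∈ interior Δ ∧
    ∀ F : Set (Fin n → ℝ), IsFaceOf F Δ → faceDim F + 1 = n →
      ∃ l : Fin n → ℤ, F ⊆ {x | dotp x (fun i => (l i : ℝ)) = -1}

/-- The dual (polar) set `Δ* = {y | ⟨x, y⟩ ≥ -1 for all x ∈ Δ}`. -/
def dualSet {n : ℕ} (Δ : Set (Fin n → ℝ)) : Set (Fin n → ℝ) :=
  {y | ∀ x ∈ Δ, -1 ≤ dotp x y}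

/-- The face of `Δ*` dual to a face `Θ` of `Δ`. -/
def dualFace {n : ℕ} (Δ Θ : Set (Fin n → ℝ)) : Set (Fin n → ℝ) :=
  {y ∈ dualSet Δ | ∀ x ∈ Θ, dotp x y = -1}

lemma dotp_sum_smul {n m : ℕ} (c : Fin m → ℝ) (p : Fin m → (Fin n → ℝ)) (y : Fin n → ℝ) :
    dotp (∑ i, c i • p i) y = ∑ i, c i * dotp (p i) y := by
  unfold dotp
  simp only [Finset.sum_apply, Pi.smul_apply, smul_eq_mul, Finset.sum_mul, Finset.mul_sum]
  rw [Finset.sum_comm]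
  exact Finset.sum_congr rfl fun i _ => Finset.sum_congr rfl fun k _ => by ring

/-- Let `Δ ⊂ ℝⁿ` be a reflexive simplex with vertices `p₀, …, pₙ`, dual
vertices `l₀, …, lₙ` (so `⟨pᵢ, lⱼ⟩ = -1` for `i ≠ j`), diagonal entries `bᵢ = ⟨pᵢ, lᵢ⟩ ∈ ℤ`
and `d = lcm(b₀ + 1, …, bₙ + 1)`. Then there is a unique tuple `w` of positive integers
with `gcd w = 1` and `∑ wᵢ pᵢ = 0` (the weights of `Δ`); it satisfies `B(Δ)·w = 0` and
`wᵢ·(bᵢ + 1) = d` (i.e. `wᵢ = d/(bᵢᵢ + 1)`) for every `i`. -/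
theorem reflexive_simplex_weights (n : ℕ) (Δ : Set (Fin n → ℝ))
    (p l : Fin (n + 1) → (Fin n → ℝ))
    (hp : ∀ i, IsLatticePoint (p i)) (hl : ∀ j, IsLatticePoint (l j))
    (haff : AffineIndependent ℝ p)
    (hΔ : Δ = convexHull ℝ (Set.range p))
    (href : IsReflexive Δ)
    (hdual : dualSet Δ = convexHull ℝ (Set.range l))
    (hpair : ∀ i j, i ≠ j → dotp (p i) (l j) = -1)
    (b : Fin (n + 1) → ℤ) (hb : ∀ i, (b i : ℝ) = dotp (p i) (l i)) :
    (∃! w : Fin (n + 1) → ℤ,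
      (∀ i, 0 < w i) ∧ Finset.univ.gcd w = 1 ∧
        ∑ i, (w i : ℝ) • p i = (0 : Fin n → ℝ)) ∧
    (∀ w : Fin (n + 1) → ℤ,
      ((∀ i, 0 < w i) ∧ Finset.univ.gcd w = 1 ∧
        ∑ i, (w i : ℝ) • p i = (0 : Fin n → ℝ)) →
      (∀ i, ∑ j, dotp (p i) (l j) * (w j : ℝ) = 0) ∧
      (∀ i, w i * (b i + 1) = Finset.univ.lcm fun k => b k + 1)) := by
  classical
  -- Key linear relation: any real relation `∑ cᵢ pᵢ = 0` gives `cⱼ(bⱼ+1) = ∑ cᵢ`.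
  have key : ∀ c : Fin (n + 1) → ℝ, ∑ i, c i • p i = 0 →
      ∀ j, c j * ((b j : ℝ) + 1) = ∑ i, c i := by
    intro c hc j
    have h0 : ∑ i, c i * dotp (p i) (l j) = 0 := by
      rw [← dotp_sum_smul, hc]; simp [dotp]
    rw [← Finset.add_sum_erase _ _ (Finset.mem_univ j)] at h0
    have h1 : ∑ i ∈ Finset.univ.erase j, c i * dotp (p i) (l j)
        = ∑ i ∈ Finset.univ.erase j, -(c i) := by
      refine Finset.sum_congr rfl fun i hi => ?_
      rw [hpair i j (Finset.ne_of_mem_erase hi)]; ring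
    rw [h1, Finset.sum_neg_distrib, Finset.sum_erase_eq_sub (Finset.mem_univ j), ← hb j] at h0
    linarith
  -- Barycentric coordinates of 0.
  have h0Δ : (0 : Fin n → ℝ) ∈ convexHull ℝ (Set.range p) := by
    rw [← hΔ]; exact interior_subset href.2.1
  rw [convexHull_range_eq_exists_affineCombination] at h0Δ
  obtain ⟨s, w0, hw00, hw01, hcomb⟩ := h0Δ
  set t : Fin (n + 1) → ℝ := fun i => if i ∈ s then w0 i else 0 with ht_def
  have ht_nonneg : ∀ i, 0 ≤ t i := by
    intro i; by_cases h : i ∈ s <;> simp [ht_def, h, hw00 i]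
  have ht_sum : ∑ i, t i = 1 := by
    rw [← hw01]; simp [ht_def, Finset.sum_ite_mem]
  have ht_comb : ∑ i, t i • p i = 0 := by
    rw [← hcomb, affineCombination_eq_linear_combination s p w0 hw01]
    simp [ht_def, ite_smul, Finset.sum_ite_mem]
  have ht : ∀ j, t j * ((b j : ℝ) + 1) = 1 := by
    intro j; rw [key t ht_comb j, ht_sum]
  have hta : ∀ j, (0 : ℝ) < (b j : ℝ) + 1 := by
    intro j
    by_contra h
    push_neg at h
    nlinarith [ht j, ht_nonneg j]
  set a : Fin (n + 1) → ℤ := fun k => b k + 1 with ha_def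
  have ha : ∀ j, 0 < a j := by intro j; have := hta j; exact_mod_cast this
  set d : ℤ := Finset.univ.lcm a with hd_def
  have hd_ne : d ≠ 0 := by
    intro h
    rw [hd_def, Finset.lcm_eq_zero_iff] at h
    obtain ⟨i, -, hi⟩ := h
    exact (ha i).ne' hi
  have hd_nonneg : 0 ≤ d := by
    have := Finset.normalize_lcm (s := (Finset.univ : Finset (Fin (n+1)))) (f := a)
    exact Int.nonneg_of_normalize_eq_self this
  have hd_pos : 0 < d := lt_of_le_of_ne hd_nonneg (Ne.symm hd_ne)
  set W : Fin (n + 1) → ℤ := fun i => d / a i with hW_def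
  have hWa : ∀ i, W i * a i = d := fun i =>
    Int.ediv_mul_cancel (Finset.dvd_lcm (Finset.mem_univ i))
  have hW_dvd : ∀ i, W i ∣ d := fun i => ⟨a i, (hWa i).symm⟩
  have hWpos : ∀ i, 0 < W i := by
    intro i
    by_contra h
    push_neg at h
    nlinarith [hWa i, ha i, hd_pos]
  -- gcd of W is 1
  have hgcdW : Finset.univ.gcd W = 1 := by
    set g := Finset.univ.gcd W with hg_def
    have hgdvd : ∀ i, g ∣ W i := fun i => Finset.gcd_dvd (Finset.mem_univ i)
    have hg_ne : g ≠ 0 := by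
      intro h
      rw [hg_def, Finset.gcd_eq_zero_iff] at h
      exact (hWpos 0).ne' (h 0 (Finset.mem_univ 0))
    obtain ⟨e, he⟩ := (hgdvd 0).trans (hW_dvd 0)
    have hae : ∀ i, a i ∣ e := by
      intro i
      obtain ⟨m, hm⟩ := hgdvd i
      refine ⟨m, ?_⟩
      have hge : g * e = g * (a i * m) := by
        rw [← he, ← hWa i, hm]; ring
      exact mul_left_cancel₀ hg_ne hge
    have hde : d ∣ e := Finset.lcm_dvd fun i _ => hae i
    have hed : e ∣ d := ⟨g, by rw [he]; ring⟩
    have hg_pos : 0 < g := by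
      rcases lt_or_eq_of_le (Int.nonneg_of_normalize_eq_self
        (Finset.normalize_gcd (s := (Finset.univ : Finset (Fin (n+1)))) (f := W))) with h | h
      · exact h
      · exact absurd h.symm hg_ne
    have he_nonneg : 0 ≤ e := by nlinarith [hd_pos, he]
    have hed' : e = d := Int.dvd_antisymm he_nonneg hd_nonneg hed hde
    rw [hed'] at he
    have : g * d = 1 * d := by linarith
    exact mul_right_cancel₀ hd_ne this
  -- W gives the zero combination
  have hWcast : ∀ i, (W i : ℝ) = (d : ℝ) * t i := by
    intro i
    have h1 : (W i : ℝ) * ((b i : ℝ) + 1) = (d : ℝ) := by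
      have := hWa i
      push_cast [ha_def] at this ⊢
      exact_mod_cast this
    calc (W i : ℝ) = (W i : ℝ) * (t i * ((b i : ℝ) + 1)) := by rw [ht i]; ring
      _ = ((W i : ℝ) * ((b i : ℝ) + 1)) * t i := by ring
      _ = (d : ℝ) * t i := by rw [h1]
  have hWcomb : ∑ i, (W i : ℝ) • p i = (0 : Fin n → ℝ) := by
    have : ∑ i, (W i : ℝ) • p i = (d : ℝ) • ∑ i, t i • p i := by
      rw [Finset.smul_sum]
      refine Finset.sum_congr rfl fun i _ => ?_
      rw [hWcast i, mul_smul]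
    rw [this, ht_comb, smul_zero]
  -- integer version of the key relation
  have keyZ : ∀ w : Fin (n + 1) → ℤ, (∑ i, (w i : ℝ) • p i = (0 : Fin n → ℝ)) →
      ∀ j, w j * a j = ∑ i, w i := by
    intro w hwcomb j
    have hkey := key (fun i => ((w i : ℤ) : ℝ)) hwcomb j
    have h2 : ((w j * a j : ℤ) : ℝ) = ((∑ i, w i : ℤ) : ℝ) := by
      push_cast [ha_def]
      convert hkey using 1 <;> push_cast <;> ring
    exact_mod_cast h2
  have hsumW : ∑ k, W k = d := by
    rw [← keyZ W hWcomb 0, hWa 0]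
  -- Any solution equals W
  have main : ∀ w : Fin (n + 1) → ℤ,
      ((∀ i, 0 < w i) ∧ Finset.univ.gcd w = 1 ∧
        ∑ i, (w i : ℝ) • p i = (0 : Fin n → ℝ)) → w = W := by
    intro w ⟨hwpos, hwgcd, hwcomb⟩
    have hz := keyZ w hwcomb
    set S : ℤ := ∑ i, w i with hS_def
    have hS_pos : 0 < S :=
      Finset.sum_pos (fun i _ => hwpos i) ⟨0, Finset.mem_univ 0⟩
    have hdS : d ∣ S := Finset.lcm_dvd fun i _ => ⟨w i, by rw [← hz i]; ring⟩
    obtain ⟨m, hm⟩ := hdS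
    have hm_pos : 0 < m := by nlinarith [hS_pos, hd_pos]
    have hw_eq : ∀ i, w i = W i * m := by
      intro i
      have : w i * a i = (W i * m) * a i := by
        rw [hz i, hm, ← hWa i]; ring
      exact mul_right_cancel₀ (ha i).ne' this
    have hm1 : m = 1 := by
      have : Finset.univ.gcd w = Finset.univ.gcd W * normalize m := by
        rw [show w = fun i => W i * m from funext hw_eq]
        exact Finset.gcd_mul_right
      rw [hwgcd, hgcdW, one_mul, Int.normalize_of_nonneg hm_pos.le] at this
      omega
    funext i
    rw [hw_eq i, hm1, mul_one]
  refine ⟨⟨W, ⟨hWpos, hgcdW, hWcomb⟩, fun w hw => main w hw⟩, ?_⟩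
  intro w hw
  have hwW := main w hw
  subst hwW
  refine ⟨?_, fun i => hWa i⟩
  intro i
  have hWaR : (W i : ℝ) * ((b i : ℝ) + 1) = (d : ℝ) := by
    have := hWa i
    have h2 : ((W i * a i : ℤ) : ℝ) = (d : ℝ) := by exact_mod_cast this
    push_cast [ha_def] at h2
    convert h2 using 2
  have hSR : ∑ j, ((W j : ℤ) : ℝ) = (d : ℝ) := by exact_mod_cast hsumW
  rw [← Finset.add_sum_erase _ _ (Finset.mem_univ i)]
  have h2 : ∑ j ∈ Finset.univ.erase i, dotp (p i) (l j) * ((W j : ℤ) : ℝ)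
      = ∑ j ∈ Finset.univ.erase i, -((W j : ℤ) : ℝ) := by
    refine Finset.sum_congr rfl fun j hj => ?_
    rw [hpair i j (Finset.ne_of_mem_erase hj).symm]; ring
  rw [h2, Finset.sum_neg_distrib, Finset.sum_erase_eq_sub (Finset.mem_univ i), ← hb i]
  linarith
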